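/- Let Y = ℕ → [0,1] with the product topology and let σ : Y → Y be the shift σ(x)(n) = x(n+1). Let R₁ = {(x,y) ∈ Y × Y : σ(x) = σ(y)} and R₂ = {(x,y) ∈ Y × Y : σ(σ(x)) = σ(σ(y))}, so R₁ ⊆ R₂. Then R₁ is NOT an open subset of R₂ when R₂ carries the subspace topology from Y × Y. -/

import Mathlib

/-- For the one-sided shift `σ(x)(n) = x(n+1)` on `Y = ℕ → [0,1]`, the set
`R₁ = {(x,y) | σ x = σ y}` is NOT open in `R₂ = {(x,y) | σ² x = σ² y}` with the
subspace topology from `Y × Y`. -/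
theorem R1_not_open_in_R2 :
    ¬ IsOpen {p : {q : (ℕ → unitInterval) × (ℕ → unitInterval) //
        (fun n => q.1 (n + 2)) = (fun n => q.2 (n + 2))} |
      (fun n => p.val.1 (n + 1)) = (fun n => p.val.2 (n + 1))} := by
  intro hopen
  set Y := ℕ → unitInterval
  set R2 := {q : Y × Y // (fun n => q.1 (n + 2)) = (fun n => q.2 (n + 2))}
  -- the constant zero point
  set x0 : Y := fun _ => 0 with hx0
  -- the perturbed sequence
  have hmem : ∀ k : ℕ, (1 : ℝ) / (k + 1) ∈ unitInterval := by
    intro k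
    constructor
    · positivity
    · rw [div_le_one (by positivity)]
      linarith [Nat.cast_nonneg (α := ℝ) k]
  set y : ℕ → Y := fun k n => if n = 1 then ⟨1 / (k + 1), hmem k⟩ else 0 with hy
  have hR2 : ∀ k, ((x0, y k) : Y × Y) ∈
      {q : Y × Y | (fun n => q.1 (n + 2)) = (fun n => q.2 (n + 2))} := by
    intro k
    funext n
    simp [hy, hx0, Nat.succ_ne_zero]
  set p : ℕ → R2 := fun k => ⟨(x0, y k), hR2 k⟩ with hp
  set p0 : R2 := ⟨(x0, x0), rfl⟩ with hp0
  -- convergence p k → p0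
  have hconv : Filter.Tendsto p Filter.atTop (nhds p0) := by
    rw [tendsto_subtype_rng]
    refine Filter.Tendsto.prodMk_nhds tendsto_const_nhds ?_
    rw [tendsto_pi_nhds]
    intro n
    by_cases hn : n = 1
    · subst hn
      simp only [hy]
      have : Filter.Tendsto (fun k : ℕ => ((⟨1 / (k + 1), hmem k⟩ : unitInterval) : ℝ))
          Filter.atTop (nhds ((0 : unitInterval) : ℝ)) := by
        simpa using (tendsto_one_div_add_atTop_nhds_zero_nat :
          Filter.Tendsto (fun n : ℕ => 1 / ((n : ℝ) + 1)) Filter.atTop (nhds 0))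
      rw [tendsto_subtype_rng]
      simpa [hx0] using this
    · simp only [hy, hn, if_false, hx0]
      exact tendsto_const_nhds
  -- p0 is in the set
  have hp0mem : p0 ∈ {p : R2 | (fun n => p.val.1 (n + 1)) = (fun n => p.val.2 (n + 1))} := rfl
  have hev := hconv.eventually (hopen.mem_nhds hp0mem)
  obtain ⟨k, hk⟩ := hev.exists
  have := congrFun hk 0
  simp only [hp, hy, hx0] at this
  have h2 := congrArg Subtype.val this
  norm_num at h2
  exact absurd h2.symm (by positivity)
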